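/- Suppose x(t) and y(t) are two solutions of ẋ = f(x,t) with f smooth, and along the line segment between them the Jacobian ∂f/∂x(·,t) satisfies vᵀ(∂f/∂x)v ≤ -λ‖v‖² uniformly for some λ > 0. Then (d/dt)‖x(t)-y(t)‖² ≤ -2λ‖x(t)-y(t)‖², and hence ‖x(t)-y(t)‖ ≤ e^{-λt}‖x(0)-y(0)‖ for t ≥ 0. -/

import Mathlib

open Real

/-- contraction between two trajectories under a uniform Jacobian bound
along the connecting segment. -/
theorem stmt5 (n : ℕ) (f : EuclideanSpace ℝ (Fin n) → ℝ → EuclideanSpace ℝ (Fin n))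
    (hf : ContDiff ℝ 1 (fun p : EuclideanSpace ℝ (Fin n) × ℝ => f p.1 p.2))
    (lam : ℝ) (hlam : 0 < lam)
    (x y : ℝ → EuclideanSpace ℝ (Fin n))
    (hx : ∀ t, HasDerivAt x (f (x t) t) t) (hy : ∀ t, HasDerivAt y (f (y t) t) t)
    (hJ : ∀ (t s : ℝ), s ∈ Set.Icc (0 : ℝ) 1 → ∀ v : EuclideanSpace ℝ (Fin n),
      (inner ℝ v (fderiv ℝ (fun z => f z t) (y t + s • (x t - y t)) v) : ℝ) ≤ -lam * ‖v‖ ^ 2) :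
    (∀ t, deriv (fun t => ‖x t - y t‖ ^ 2) t ≤ -2 * lam * ‖x t - y t‖ ^ 2) ∧
    (∀ t : ℝ, 0 ≤ t → ‖x t - y t‖ ≤ Real.exp (-lam * t) * ‖x 0 - y 0‖) := by
  have hdiff : ∀ (t : ℝ) (p : EuclideanSpace ℝ (Fin n)),
      HasFDerivAt (fun z => f z t) (fderiv ℝ (fun z => f z t) p) p := by
    intro t p
    have h1 : DifferentiableAt ℝ (fun p : EuclideanSpace ℝ (Fin n) × ℝ => f p.1 p.2) (p, t) :=
      (hf.differentiable one_ne_zero).differentiableAt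
    have : DifferentiableAt ℝ (fun z : EuclideanSpace ℝ (Fin n) => f z t) p :=
      by have := h1.comp p (differentiableAt_id.prodMk (differentiableAt_const t) :
        DifferentiableAt ℝ (fun z : EuclideanSpace ℝ (Fin n) => (z, t)) p); exact this
    exact this.hasFDerivAt
  -- key inner product bound
  have key : ∀ t, (inner ℝ (x t - y t) (f (x t) t - f (y t) t) : ℝ)
      ≤ -lam * ‖x t - y t‖ ^ 2 := by
    intro t
    set v := x t - y t with hv
    set φ : ℝ → ℝ := fun s => (inner ℝ v (f (y t + s • v) t) : ℝ) + lam * ‖v‖ ^ 2 * s with hφ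
    have hder : ∀ s : ℝ, HasDerivAt φ
        ((inner ℝ v (fderiv ℝ (fun z => f z t) (y t + s • v) v) : ℝ) + lam * ‖v‖ ^ 2) s := by
      intro s
      have h1 : HasDerivAt (fun s : ℝ => y t + s • v) v s := by
        simpa using ((hasDerivAt_id s).smul_const v).const_add (y t)
      have h2 : HasDerivAt (fun s : ℝ => f (y t + s • v) t)
          (fderiv ℝ (fun z => f z t) (y t + s • v) v) s :=
        (hdiff t _).comp_hasDerivAt s h1
      have h3 : HasDerivAt (fun s : ℝ => (inner ℝ v (f (y t + s • v) t) : ℝ))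
          (inner ℝ v (fderiv ℝ (fun z => f z t) (y t + s • v) v) : ℝ) s := by
        simpa using (hasDerivAt_const s v).inner ℝ h2
      have h4 : HasDerivAt (fun s : ℝ => lam * ‖v‖ ^ 2 * s) (lam * ‖v‖ ^ 2) s := by
        simpa using (hasDerivAt_id s).const_mul (lam * ‖v‖ ^ 2)
      exact h3.add h4
    have hanti : AntitoneOn φ (Set.Icc (0 : ℝ) 1) := by
      apply antitoneOn_of_deriv_nonpos (convex_Icc 0 1)
      · exact fun s _ => (hder s).continuousAt.continuousWithinAt
      · exact fun s _ => ((hder s).differentiableAt).differentiableWithinAt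
      · intro s hs
        rw [(hder s).deriv]
        have hs' : s ∈ Set.Icc (0 : ℝ) 1 := interior_subset hs
        have := hJ t s hs' v
        linarith
    have h01 : φ 1 ≤ φ 0 := hanti (by norm_num) (by norm_num) (by norm_num)
    have e1 : y t + (1 : ℝ) • v = x t := by rw [one_smul, hv]; abel
    have e0 : y t + (0 : ℝ) • v = y t := by simp
    simp only [hφ, e1, e0, mul_one, mul_zero, add_zero] at h01
    rw [inner_sub_right]
    linarith
  -- derivative of the squared norm
  have hgder : ∀ t, HasDerivAt (fun t => ‖x t - y t‖ ^ 2)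
      (2 * (inner ℝ (x t - y t) (f (x t) t - f (y t) t) : ℝ)) t := by
    intro t
    have hu : HasDerivAt (fun t => x t - y t) (f (x t) t - f (y t) t) t := (hx t).sub (hy t)
    have h := hu.inner ℝ hu
    have heq : (fun t => ‖x t - y t‖ ^ 2)
        = fun t => (inner ℝ (x t - y t) (x t - y t) : ℝ) := by
      funext t; rw [real_inner_self_eq_norm_sq]
    rw [heq]
    refine h.congr_deriv ?_
    rw [real_inner_comm]; ring
  have part1 : ∀ t, deriv (fun t => ‖x t - y t‖ ^ 2) t ≤ -2 * lam * ‖x t - y t‖ ^ 2 := by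
    intro t
    rw [(hgder t).deriv]
    have := key t
    nlinarith
  refine ⟨part1, ?_⟩
  intro t ht
  -- Gronwall via monotonicity of exp(2 lam t) * g(t)
  set h : ℝ → ℝ := fun t => Real.exp (2 * lam * t) * ‖x t - y t‖ ^ 2 with hh
  have hhder : ∀ t, HasDerivAt h
      (2 * lam * Real.exp (2 * lam * t) * ‖x t - y t‖ ^ 2
        + Real.exp (2 * lam * t) * (2 * (inner ℝ (x t - y t) (f (x t) t - f (y t) t) : ℝ))) t := by
    intro t
    have he : HasDerivAt (fun t : ℝ => Real.exp (2 * lam * t)) (2 * lam * Real.exp (2 * lam * t)) t := by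
      have : HasDerivAt (fun t : ℝ => 2 * lam * t) (2 * lam) t := by
        simpa using (hasDerivAt_id t).const_mul (2 * lam)
      simpa [mul_comm] using this.exp
    exact he.mul (hgder t)
  have hanti : Antitone h := by
    apply antitone_of_deriv_nonpos (fun t => (hhder t).differentiableAt)
    intro t
    rw [(hhder t).deriv]
    have hk := key t
    have hexp : (0 : ℝ) < Real.exp (2 * lam * t) := Real.exp_pos _
    nlinarith
  have hth : h t ≤ h 0 := hanti ht
  simp only [hh, mul_zero, Real.exp_zero, one_mul] at hth
  have hsq : ‖x t - y t‖ ^ 2 ≤ (Real.exp (-lam * t) * ‖x 0 - y 0‖) ^ 2 := by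
    have hexp : (0 : ℝ) < Real.exp (2 * lam * t) := Real.exp_pos _
    have : Real.exp (-lam * t) ^ 2 = (Real.exp (2 * lam * t))⁻¹ := by
      rw [← Real.exp_nat_mul, ← Real.exp_neg]; ring_nf
    rw [mul_pow, this]
    have h5 : ‖x t - y t‖ ^ 2 ≤ ‖x 0 - y 0‖ ^ 2 / Real.exp (2 * lam * t) :=
      (le_div_iff₀ hexp).mpr (by rw [mul_comm]; exact hth)
    have h6 : ‖x 0 - y 0‖ ^ 2 / Real.exp (2 * lam * t)
        = (Real.exp (2 * lam * t))⁻¹ * ‖x 0 - y 0‖ ^ 2 := by ring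
    linarith
  have h1 : (0 : ℝ) ≤ ‖x t - y t‖ := norm_nonneg _
  have h2 : (0 : ℝ) ≤ Real.exp (-lam * t) * ‖x 0 - y 0‖ :=
    mul_nonneg (Real.exp_pos _).le (norm_nonneg _)
  nlinarith
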